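/- Let H be an abelian group with automorphism t and let k_1, k_2 be coprime positive integers. If characters χ_1, χ_2: H → S^1 factor through H/(t^{k_1}-1)H and H/(t^{k_2}-1)H respectively, and the product character χ_1 χ_2 (which factors through H/(t^{k_1 k_2}-1)H) factors through H/(t^k-1)H for some k < k_1 k_2, then χ_1 factors through H/(t^l-1)H for some l < k_1 or χ_2 factors through H/(t^l-1)H for some l < k_2. -/

import Mathlib

private lemma per_mul {H : Type*} [AddCommGroup H] (t : AddAut H) (χ : H → ℂ) (m : ℕ)
    (hm : ∀ a, χ ((m • t) a) = χ a) : ∀ j : ℕ, ∀ a, χ (((m * j) • t) a) = χ a := by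
  intro j
  induction j with
  | zero => simp
  | succ n ih =>
    intro a
    have : ((m * (n + 1)) • t) a = ((m * n) • t) ((m • t) a) := by
      rw [← AddAut.add_apply, ← add_nsmul]; ring_nf
    rw [this, ih, hm]

private lemma per_gcd {H : Type*} [AddCommGroup H] (t : AddAut H) (χ : H → ℂ) (m n : ℕ)
    (hm : ∀ a, χ ((m • t) a) = χ a) (hn : ∀ a, χ ((n • t) a) = χ a) :
    ∀ a, χ (((Nat.gcd m n) • t) a) = χ a := by
  set P : ℤ → Prop := fun z => ∀ a, χ ((z • t) a) = χ a with hP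
  have hadd : ∀ x y, P x → P y → P (x + y) := by
    intro x y hx hy a
    have : ((x + y) • t) a = (x • t) ((y • t) a) := by
      rw [← AddAut.add_apply, ← add_zsmul]
    rw [this, hx, hy]
  have hneg : ∀ x, P x → P (-x) := by
    intro x hx a
    have := hx (((-x) • t) a)
    rw [← AddAut.add_apply, ← add_zsmul, add_neg_cancel, zero_zsmul, AddAut.zero_apply] at this
    exact this.symm
  have hzero : P 0 := by intro a; simp
  have hsmul : ∀ (c x : ℤ), P x → P (x * c) := by
    intro c x hx
    induction c using Int.induction_on with
    | zero => simpa using hzero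
    | succ i ih =>
      have := hadd _ _ ih hx
      have e : x * (i : ℤ) + x = x * ((i : ℤ) + 1) := by ring
      rwa [e] at this
    | pred i ih =>
      have := hadd _ _ ih (hneg _ hx)
      have e : x * (-i : ℤ) + -x = x * (-(i : ℤ) - 1) := by ring
      rwa [e] at this
  have hm' : P (m : ℤ) := by intro a; rw [natCast_zsmul]; exact hm a
  have hn' : P (n : ℤ) := by intro a; rw [natCast_zsmul]; exact hn a
  have hgcd : P (Nat.gcd m n : ℤ) := by
    have e : (Nat.gcd m n : ℤ) = (m : ℤ) * Int.gcdA m n + (n : ℤ) * Int.gcdB m n := by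
      have := Int.gcd_eq_gcd_ab (m : ℤ) (n : ℤ)
      simpa using this
    rw [e]
    exact hadd _ _ (hsmul _ _ hm') (hsmul _ _ hn')
  intro a
  have := hgcd a
  rwa [natCast_zsmul] at this

/-- If `k₁, k₂` are coprime, characters `χ₁, χ₂ : H → S¹` factor through `H/(t^{k₁}-1)H` and
`H/(t^{k₂}-1)H` respectively, and the product character `χ₁χ₂` factors through `H/(t^k-1)H` for
some `k < k₁k₂`, then `χ₁` factors through `H/(t^l-1)H` for some `l < k₁` or `χ₂` factors
through `H/(t^l-1)H` for some `l < k₂`. -/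
theorem product_character_factors {H : Type*} [AddCommGroup H] (t : AddAut H)
    (k₁ k₂ : ℕ) (hk₁ : 0 < k₁) (hk₂ : 0 < k₂) (hco : Nat.Coprime k₁ k₂)
    (χ₁ χ₂ : H → ℂ)
    (hχ₁mul : ∀ a b : H, χ₁ (a + b) = χ₁ a * χ₁ b)
    (hχ₂mul : ∀ a b : H, χ₂ (a + b) = χ₂ a * χ₂ b)
    (hχ₁norm : ∀ a : H, ‖χ₁ a‖ = 1) (hχ₂norm : ∀ a : H, ‖χ₂ a‖ = 1)
    (hχ₁fac : ∀ a : H, χ₁ ((k₁ • t) a) = χ₁ a)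
    (hχ₂fac : ∀ a : H, χ₂ ((k₂ • t) a) = χ₂ a)
    (k : ℕ) (hk : 0 < k) (hklt : k < k₁ * k₂)
    (hfac : ∀ a : H, χ₁ ((k • t) a) * χ₂ ((k • t) a) = χ₁ a * χ₂ a) :
    (∃ l : ℕ, 0 < l ∧ l < k₁ ∧ ∀ a : H, χ₁ ((l • t) a) = χ₁ a) ∨
    (∃ l : ℕ, 0 < l ∧ l < k₂ ∧ ∀ a : H, χ₂ ((l • t) a) = χ₂ a) := by
  have hχ₁ne : ∀ a, χ₁ a ≠ 0 := fun a h => by simpa [h] using hχ₁norm a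
  have hχ₂ne : ∀ a, χ₂ a ≠ 0 := fun a h => by simpa [h] using hχ₂norm a
  -- product invariant under t^(k*j)
  have hprod : ∀ j : ℕ, ∀ a, χ₁ (((k * j) • t) a) * χ₂ (((k * j) • t) a) = χ₁ a * χ₂ a :=
    per_mul t (fun a => χ₁ a * χ₂ a) k hfac
  -- χ₁ invariant under t^(k*k₂)
  have hχ₁kk₂ : ∀ a, χ₁ (((k * k₂) • t) a) = χ₁ a := by
    intro a
    have h1 := hprod k₂ a
    have h2 : χ₂ (((k * k₂) • t) a) = χ₂ a := by
      have := per_mul t χ₂ k₂ hχ₂fac k a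
      rwa [mul_comm k₂ k] at this
    rw [h2] at h1
    exact mul_right_cancel₀ (hχ₂ne a) h1
  -- χ₂ invariant under t^(k*k₁)
  have hχ₂kk₁ : ∀ a, χ₂ (((k * k₁) • t) a) = χ₂ a := by
    intro a
    have h1 := hprod k₁ a
    have h2 : χ₁ (((k * k₁) • t) a) = χ₁ a := by
      have := per_mul t χ₁ k₁ hχ₁fac k a
      rwa [mul_comm k₁ k] at this
    rw [h2] at h1
    exact mul_left_cancel₀ (hχ₁ne a) h1
  -- gcd reductions
  have hg₁ : ∀ a, χ₁ (((Nat.gcd k k₁) • t) a) = χ₁ a := by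
    have := per_gcd t χ₁ (k * k₂) k₁ hχ₁kk₂ hχ₁fac
    rwa [Nat.Coprime.gcd_mul_right_cancel k hco.symm] at this
  have hg₂ : ∀ a, χ₂ (((Nat.gcd k k₂) • t) a) = χ₂ a := by
    have := per_gcd t χ₂ (k * k₁) k₂ hχ₂kk₁ hχ₂fac
    rwa [Nat.Coprime.gcd_mul_right_cancel k hco] at this
  by_cases h1 : Nat.gcd k k₁ < k₁
  · exact Or.inl ⟨Nat.gcd k k₁, Nat.gcd_pos_of_pos_left k₁ hk, h1, hg₁⟩
  by_cases h2 : Nat.gcd k k₂ < k₂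
  · exact Or.inr ⟨Nat.gcd k k₂, Nat.gcd_pos_of_pos_left k₂ hk, h2, hg₂⟩
  exfalso
  have e1 : Nat.gcd k k₁ = k₁ := le_antisymm (Nat.le_of_dvd hk₁ (Nat.gcd_dvd_right k k₁)) (not_lt.mp h1)
  have e2 : Nat.gcd k k₂ = k₂ := le_antisymm (Nat.le_of_dvd hk₂ (Nat.gcd_dvd_right k k₂)) (not_lt.mp h2)
  have d1 : k₁ ∣ k := e1 ▸ Nat.gcd_dvd_left k k₁
  have d2 : k₂ ∣ k := e2 ▸ Nat.gcd_dvd_left k k₂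
  have : k₁ * k₂ ∣ k := Nat.Coprime.mul_dvd_of_dvd_of_dvd hco d1 d2
  exact absurd (Nat.le_of_dvd hk this) (not_le.mpr hklt)
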